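/- With z = v/(1+v+v^2) and F_h = (v^2/(1+v+v^2)) * (1-v^{2h})/(1-v^{2h+2}), the rational function (z/(1-z)) * 1/(1 - F_h/(1-z)) equals v*(1-v^{2h+2})/(1-v^{2h+4}) for all h >= 1. -/

import Mathlib

open RatFunc

lemma poly_ne (p : Polynomial ℚ) (hp : p ≠ 0) :
    (algebraMap (Polynomial ℚ) (RatFunc ℚ)) p ≠ 0 :=
  RatFunc.algebraMap_ne_zero hp

lemma one_add_X_add_sq_ne : (1 + X + X ^ 2 : RatFunc ℚ) ≠ 0 := by
  have : (1 + X + X ^ 2 : RatFunc ℚ)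
      = algebraMap (Polynomial ℚ) (RatFunc ℚ) (1 + Polynomial.X + Polynomial.X ^ 2) := by
    simp [map_add, map_pow, RatFunc.algebraMap_X]
  rw [this]
  apply poly_ne
  intro hc
  have := congrArg (fun p => Polynomial.eval 1 p) hc
  norm_num at this

lemma one_add_sq_ne : (1 + X ^ 2 : RatFunc ℚ) ≠ 0 := by
  have : (1 + X ^ 2 : RatFunc ℚ)
      = algebraMap (Polynomial ℚ) (RatFunc ℚ) (1 + Polynomial.X ^ 2) := by
    simp [map_add, map_pow, RatFunc.algebraMap_X]
  rw [this]
  apply poly_ne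
  intro hc
  have := congrArg (fun p => Polynomial.eval 1 p) hc
  norm_num at this

lemma one_sub_pow_ne (n : ℕ) (hn : 1 ≤ n) : (1 - X ^ n : RatFunc ℚ) ≠ 0 := by
  have : (1 - X ^ n : RatFunc ℚ)
      = algebraMap (Polynomial ℚ) (RatFunc ℚ) (1 - Polynomial.X ^ n) := by
    simp [map_sub, map_pow, RatFunc.algebraMap_X]
  rw [this]
  apply poly_ne
  intro hc
  have := congrArg (fun p => Polynomial.eval 2 p) hc
  simp at this
  have h2 : (2:ℚ)^1 ≤ 2^n := by
    apply pow_le_pow_right₀ (by norm_num) hn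
  norm_num at h2
  nlinarith [this]

/-- With `z = v/(1+v+v²)` and `F_h = (v²/(1+v+v²))(1-v^{2h})/(1-v^{2h+2})`, the rational
function `(z/(1-z)) · 1/(1 - F_h/(1-z))` equals `v(1-v^{2h+2})/(1-v^{2h+4})`
for all `h ≥ 1`. -/
theorem height_gf_closed_form :
    ∀ h : ℕ, h ≥ 1 →
      (X / (1 + X + X ^ 2)) / (1 - X / (1 + X + X ^ 2)) *
          (1 / (1 - (X ^ 2 / (1 + X + X ^ 2)) * ((1 - X ^ (2 * h)) / (1 - X ^ (2 * h + 2)))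
            / (1 - X / (1 + X + X ^ 2)))) =
        (X * (1 - X ^ (2 * h + 2)) / (1 - X ^ (2 * h + 4)) : RatFunc ℚ) := by
  intro h hh
  have h1 := one_add_X_add_sq_ne
  have h1' := one_add_sq_ne
  have h3 := one_sub_pow_ne (2*h+2) (by omega)
  have h4 := one_sub_pow_ne (2*h+4) (by omega)
  have hz : (1 - X / (1 + X + X ^ 2) : RatFunc ℚ) = (1 + X^2)/(1 + X + X^2) := by
    field_simp
    ring
  rw [hz]
  have hkey : ((X ^ 2 / (1 + X + X ^ 2)) * ((1 - X ^ (2 * h)) / (1 - X ^ (2 * h + 2)))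
      / ((1 + X^2)/(1 + X + X^2)) : RatFunc ℚ)
      = 1 - (1 - X ^ (2*h+4)) / ((1 + X^2) * (1 - X ^ (2*h+2))) := by
    rw [eq_sub_iff_add_eq]
    field_simp
    ring
  rw [hkey]
  have h5 : ((1 - X ^ (2*h+4)) / ((1 + X^2) * (1 - X ^ (2*h+2))) : RatFunc ℚ) ≠ 0 := by
    apply div_ne_zero h4 (mul_ne_zero h1' h3)
  rw [sub_sub_cancel]
  field_simp
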